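/- Let κ > 0, M₂ > 0, let w₀ be a bounded function on a set E, and let g* : [0,T] × ℝ × ℝ → ℝ satisfy |g*(t,v,w) − g*(t,v',w')| ≤ M₂(|v−v'| + |w−w'|) for all t, v, v', w, w'. For bounded continuous functions v, w on E × [0,T] define G(v,w)(x,t) = e^{−κt} w₀(x) + ∫₀ᵗ e^{−κ(t−τ)} g*(τ, v(x,τ), w(x,τ)) dτ. Then for any two pairs (v,w), (v',w'): sup_{E×[0,T]} |G(v,w) − G(v',w')| ≤ (M₂/κ)( sup_{E×[0,T]} |v − v'| + sup_{E×[0,T]} |w − w'| ). -/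

import Mathlib

/-- **Contraction estimate for the gating solution operator.**
Let `G(v,w)(x,t) = e^{-κt} w₀(x) + ∫₀ᵗ e^{-κ(t-τ)} g*(τ, v(x,τ), w(x,τ)) dτ` be the
variation-of-constants solution operator of `∂ₜw + κw = g*(t,v,w)`, `w(·,0) = w₀`,
where `g*` is `M₂`-Lipschitz in `(v,w)` uniformly in `t`.  Then for bounded
continuous `v, w, v', w'`, with pointwise bounds `|v - v'| ≤ Kv` and `|w - w'| ≤ Kw`
on `E × [0,T]` (so that the suprema of `|v-v'|`, `|w-w'|` are at most `Kv`, `Kw`),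
the difference of the images is bounded by `(M₂/κ)(Kv + Kw)` on `E × [0,T]`. -/
theorem gating_operator_contraction
    {E : Type*} (T κ M₂ : ℝ) (hT : 0 < T) (hκ : 0 < κ) (hM₂ : 0 < M₂)
    (w₀ : E → ℝ) (B : ℝ) (hw₀ : ∀ x, |w₀ x| ≤ B)
    (gs : ℝ → ℝ → ℝ → ℝ)
    (hgscont : Continuous fun p : ℝ × ℝ × ℝ => gs p.1 p.2.1 p.2.2)
    (hgsLip : ∀ t v w v' w' : ℝ,
      |gs t v w - gs t v' w'| ≤ M₂ * (|v - v'| + |w - w'|))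
    (v w v' w' : E → ℝ → ℝ)
    (hv : ∀ x, Continuous (v x)) (hw : ∀ x, Continuous (w x))
    (hv' : ∀ x, Continuous (v' x)) (hw' : ∀ x, Continuous (w' x))
    (Bv : ℝ) (hbv : ∀ x t, |v x t| + |w x t| + |v' x t| + |w' x t| ≤ Bv)
    (Kv Kw : ℝ)
    (hKv : ∀ x, ∀ t ∈ Set.Icc (0 : ℝ) T, |v x t - v' x t| ≤ Kv)
    (hKw : ∀ x, ∀ t ∈ Set.Icc (0 : ℝ) T, |w x t - w' x t| ≤ Kw) :
    ∀ x, ∀ t ∈ Set.Icc (0 : ℝ) T,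
      |(Real.exp (-κ * t) * w₀ x
          + ∫ τ in (0 : ℝ)..t, Real.exp (-κ * (t - τ)) * gs τ (v x τ) (w x τ))
        - (Real.exp (-κ * t) * w₀ x
          + ∫ τ in (0 : ℝ)..t, Real.exp (-κ * (t - τ)) * gs τ (v' x τ) (w' x τ))|
      ≤ (M₂ / κ) * (Kv + Kw) := by
  intro x t ht
  obtain ⟨ht0, htT⟩ := ht
  have hKv0 : 0 ≤ Kv := (abs_nonneg _).trans (hKv x t ⟨ht0, htT⟩)
  have hKw0 : 0 ≤ Kw := (abs_nonneg _).trans (hKw x t ⟨ht0, htT⟩)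
  set C := Kv + Kw with hC
  have hC0 : 0 ≤ C := by positivity
  -- continuity of the two integrands
  have hce : Continuous fun τ : ℝ => Real.exp (-κ * (t - τ)) :=
    Real.continuous_exp.comp (continuous_const.mul (continuous_const.sub continuous_id))
  have hc1 : Continuous fun τ => Real.exp (-κ * (t - τ)) * gs τ (v x τ) (w x τ) :=
    hce.mul (hgscont.comp (continuous_id.prodMk ((hv x).prodMk (hw x))))
  have hc2 : Continuous fun τ => Real.exp (-κ * (t - τ)) * gs τ (v' x τ) (w' x τ) :=
    hce.mul (hgscont.comp (continuous_id.prodMk ((hv' x).prodMk (hw' x))))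
  rw [add_sub_add_left_eq_sub,
    ← intervalIntegral.integral_sub (hc1.intervalIntegrable 0 t)
      (hc2.intervalIntegrable 0 t)]
  have key : |∫ τ in (0:ℝ)..t,
      (Real.exp (-κ * (t - τ)) * gs τ (v x τ) (w x τ)
        - Real.exp (-κ * (t - τ)) * gs τ (v' x τ) (w' x τ))|
      ≤ ∫ τ in (0:ℝ)..t, Real.exp (-κ * (t - τ)) * (M₂ * C) := by
    refine (intervalIntegral.abs_integral_le_integral_abs ht0).trans ?_
    apply intervalIntegral.integral_mono_on ht0
    · exact ((hc1.sub hc2).abs).intervalIntegrable 0 t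
    · exact (hce.mul continuous_const).intervalIntegrable 0 t
    · intro τ hτ
      rw [← mul_sub, abs_mul, abs_of_pos (Real.exp_pos _)]
      apply mul_le_mul_of_nonneg_left _ (Real.exp_pos _).le
      refine (hgsLip τ (v x τ) (w x τ) (v' x τ) (w' x τ)).trans ?_
      apply mul_le_mul_of_nonneg_left _ hM₂.le
      exact add_le_add (hKv x τ ⟨hτ.1, hτ.2.trans htT⟩) (hKw x τ ⟨hτ.1, hτ.2.trans htT⟩)
  refine key.trans ?_
  have hexp : (∫ τ in (0:ℝ)..t, Real.exp (-κ * (t - τ)))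
      = (1 - Real.exp (-κ * t)) / κ := by
    have : ∀ τ : ℝ, Real.exp (-κ * (t - τ)) = Real.exp (-κ * t) * Real.exp (κ * τ) := by
      intro τ; rw [← Real.exp_add]; ring_nf
    simp only [this]
    rw [intervalIntegral.integral_const_mul]
    have h2 : (∫ τ in (0:ℝ)..t, Real.exp (κ * τ))
        = κ⁻¹ • ∫ τ in (κ*0:ℝ)..(κ*t), Real.exp τ :=
      intervalIntegral.integral_comp_mul_left Real.exp hκ.ne'
    rw [h2, integral_exp]
    field_simp
    rw [smul_eq_mul, mul_zero, Real.exp_zero]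
    have e : Real.exp (-(κ * t)) * Real.exp (κ * t) = 1 := by
      rw [← Real.exp_add, neg_add_cancel, Real.exp_zero]
    have hk1 : κ * (1 / κ) = 1 := mul_one_div_cancel hκ.ne'
    linear_combination (Real.exp (-(κ * t)) * (Real.exp (κ * t) - 1)) * hk1 + e
  rw [intervalIntegral.integral_mul_const, hexp]
  calc (1 - Real.exp (-κ * t)) / κ * (M₂ * C) ≤ 1 / κ * (M₂ * C) := by
        gcongr
        exact sub_le_self _ (Real.exp_pos _).le
    _ = M₂ / κ * (Kv + Kw) := by rw [hC]; ring
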